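/- For every k ≥ 1 and L = lcm(1,...,k), the pair (x^{k-1+L} y^{k-1}, x^{k-1} y^{k-1+L}) is an identity of T_k: for all f, g : Fin k → Fin k and every point z, g^{k-1}(f^{k-1+L}(z)) = g^{k-1+L}(f^{k-1}(z)). -/

import Mathlib

/-- If `f^[i] z = f^[i+c] z` then adding any multiple of `c` past `i` doesn't change. -/
lemma iter_period {α : Type*} (f : α → α) (z : α) (i c : ℕ)
    (h : f^[i + c] z = f^[i] z) (m t : ℕ) :
    f^[i + m + c * t] z = f^[i + m] z := by
  induction t with
  | zero => simp
  | succ t ih =>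
    have : i + m + c * (t + 1) = m + c * t + (i + c) := by ring
    rw [this, Function.iterate_add_apply, h, ← Function.iterate_add_apply]
    have : m + c * t + i = i + m + c * t := by ring
    rw [this, ih]

lemma key_stab (k : ℕ) (hk : 1 ≤ k) (f : Fin k → Fin k) (z : Fin k) :
    f^[k - 1 + (Finset.Icc 1 k).lcm id] z = f^[k - 1] z := by
  -- pigeonhole: among f^[0] z, ..., f^[k] z there is a repetition
  obtain ⟨a, b, hab, heq⟩ := Fintype.exists_ne_map_eq_of_card_lt
    (fun n : Fin (k + 1) => f^[(n : ℕ)] z) (by simp)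
  -- wlog i < j
  obtain ⟨i, j, hij, hjk, hper⟩ :
      ∃ i j : ℕ, i < j ∧ j ≤ k ∧ f^[j] z = f^[i] z := by
    rcases lt_or_gt_of_ne hab with h | h
    · exact ⟨a, b, h, Nat.lt_succ_iff.mp b.isLt, heq.symm⟩
    · exact ⟨b, a, h, Nat.lt_succ_iff.mp a.isLt, heq⟩
  set c := j - i with hc
  have hc1 : 1 ≤ c := by omega
  have hck : c ≤ k := le_trans (Nat.sub_le _ _) hjk
  have hdvd : c ∣ (Finset.Icc 1 k).lcm id :=
    Finset.dvd_lcm (by simp [Finset.mem_Icc, hc1, hck]; omega)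
  obtain ⟨t, ht⟩ := hdvd
  have hic : i + c = j := by omega
  have hper' : f^[i + c] z = f^[i] z := by rw [hic]; exact hper
  have him : i ≤ k - 1 := by omega
  have := iter_period f z i c hper' (k - 1 - i) t
  have hm : i + (k - 1 - i) = k - 1 := by omega
  rw [hm] at this
  rw [ht, ← this]

theorem unbalanced_identity (k : ℕ) (hk : 1 ≤ k) (f g : Fin k → Fin k) (z : Fin k) :
    g^[k - 1] (f^[k - 1 + (Finset.Icc 1 k).lcm id] z) =
    g^[k - 1 + (Finset.Icc 1 k).lcm id] (f^[k - 1] z) := by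
  rw [key_stab k hk f z, key_stab k hk g (f^[k - 1] z)]
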